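/- (Variance after modulus switching.) Let n ≥ 1, let t > 0 and 0 < q' ≤ q be real numbers, and let V_s > 0. Let ν, d_0, d_1, s be mutually independent random polynomials in R_n, where d_0 and d_1 have independent mean-zero coefficients of variance t²/12, s has independent identically distributed mean-zero coefficients of variance V_s, and the coefficients of ν are square-integrable. Then for every 0 ≤ i ≤ n−1, Var( ( (q'/q)·ν + d_0 + d_1·s )|_i ) = (q'²/q²)·Var(ν|_i) + (t²/12)·(1 + n·V_s), products computed in R_n. -/

import Mathlib

open MeasureTheory ProbabilityTheory Polynomial
open scoped NNReal ENNReal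

/-- The polynomial in `ℝ[x]` of degree `< n` with coefficients `c 0, …, c (n-1)`;
it is the canonical representative of an element of `R_n = ℝ[x]/(x^n+1)`. -/
noncomputable def polyOf (n : ℕ) (c : Fin n → ℝ) : Polynomial ℝ :=
  ∑ j : Fin n, Polynomial.C (c j) * Polynomial.X ^ (j : ℕ)

/-- The `i`-th coefficient of the unique representative of degree `< n` of
`p mod (x^n + 1)`, i.e. the `i`-th coefficient of the image of `p` in `R_n`. -/
noncomputable def redCoeff (n : ℕ) (p : Polynomial ℝ) (i : ℕ) : ℝ :=
  (p %ₘ (Polynomial.X ^ n + 1)).coeff i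

lemma polyOf_coeff (n : ℕ) (c : Fin n → ℝ) (m : ℕ) :
    (polyOf n c).coeff m = if h : m < n then c ⟨m, h⟩ else 0 := by
  unfold polyOf
  rw [Polynomial.finset_sum_coeff]
  simp only [Polynomial.coeff_C_mul, Polynomial.coeff_X_pow]
  split
  · rename_i h
    rw [Finset.sum_eq_single (⟨m, h⟩ : Fin n)]
    · simp
    · intro b _ hb
      have : m ≠ (b : ℕ) := fun he => hb (by simp [Fin.ext_iff, he.symm])
      simp [this]
    · simp
  · rename_i h
    apply Finset.sum_eq_zero
    intro b _
    have : m ≠ (b : ℕ) := by omega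
    simp [this]

lemma monic_XnAddOne (n : ℕ) (hn : 0 < n) : (Polynomial.X ^ n + 1 : Polynomial ℝ).Monic := by
  have : (1 : Polynomial ℝ).degree < (Polynomial.X ^ n : Polynomial ℝ).degree := by
    simpa [Polynomial.degree_X_pow] using (by exact_mod_cast hn : (0:WithBot ℕ) < n)
  simpa using (Polynomial.monic_X_pow n).add_of_left this

lemma degree_XnAddOne (n : ℕ) (hn : 0 < n) :
    (Polynomial.X ^ n + 1 : Polynomial ℝ).degree = n := by
  rw [Polynomial.degree_add_eq_left_of_degree_lt, Polynomial.degree_X_pow]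
  simpa [Polynomial.degree_X_pow] using (by exact_mod_cast hn : (0:WithBot ℕ) < n)

lemma redCoeff_of_bounded (n : ℕ) (hn : 0 < n) (p : Polynomial ℝ)
    (hp : ∀ m, 2 * n ≤ m → p.coeff m = 0) (i : ℕ) (hi : i < n) :
    redCoeff n p i = p.coeff i - p.coeff (n + i) := by
  classical
  set q1 : Polynomial ℝ :=
    ∑ j ∈ Finset.range n, Polynomial.C (p.coeff (n + j)) * Polynomial.X ^ j with hq1
  set r : Polynomial ℝ :=
    ∑ j ∈ Finset.range n, Polynomial.C (p.coeff j - p.coeff (n + j)) * Polynomial.X ^ j with hr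
  have hcoeffsum : ∀ (f : ℕ → ℝ) (m : ℕ),
      (∑ j ∈ Finset.range n, Polynomial.C (f j) * Polynomial.X ^ j).coeff m
        = if m < n then f m else 0 := by
    intro f m
    rw [Polynomial.finset_sum_coeff]
    simp only [Polynomial.coeff_C_mul, Polynomial.coeff_X_pow]
    split
    · rename_i h
      rw [Finset.sum_eq_single m] <;> simp_all
      intro b _ hb; simp [Ne.symm hb]
    · rename_i h
      apply Finset.sum_eq_zero
      intro b hb
      simp only [Finset.mem_range] at hb
      have : m ≠ b := by omega
      simp [this]
  have hq1c : ∀ m, q1.coeff m = if m < n then p.coeff (n + m) else 0 := fun m => hcoeffsum _ m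
  have hrc : ∀ m, r.coeff m = if m < n then p.coeff m - p.coeff (n + m) else 0 :=
    fun m => hcoeffsum _ m
  have hdecomp : p = (Polynomial.X ^ n + 1) * q1 + r := by
    ext m
    have hrw : (Polynomial.X ^ n + 1) * q1 = q1 * Polynomial.X ^ n + q1 := by ring
    rw [Polynomial.coeff_add, hrw, Polynomial.coeff_add, Polynomial.coeff_mul_X_pow', hq1c, hrc,
      hq1c]
    rcases lt_or_ge m n with h1 | h1
    · simp only [if_pos h1, if_neg (by omega : ¬ n ≤ m)]
      ring
    · rcases lt_or_ge m (2 * n) with h2 | h2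
      · have hmn : m - n < n := by omega
        simp only [if_pos h1, if_pos hmn, if_neg (by omega : ¬ m < n)]
        have : n + (m - n) = m := by omega
        rw [this]; ring
      · have hmn : ¬ (m - n < n) := by omega
        simp only [if_pos h1, if_neg hmn, if_neg (by omega : ¬ m < n)]
        rw [hp m h2]; ring
  have hmod : p %ₘ (Polynomial.X ^ n + 1) = r := by
    conv_lhs => rw [hdecomp]
    rw [Polynomial.add_modByMonic]
    have h0 : ((Polynomial.X ^ n + 1) * q1) %ₘ (Polynomial.X ^ n + 1) = 0 :=
      Polynomial.self_mul_modByMonic (monic_XnAddOne n hn)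
    rw [h0, zero_add]
    rw [(Polynomial.modByMonic_eq_self_iff (monic_XnAddOne n hn)).2]
    rw [degree_XnAddOne n hn]
    rw [Polynomial.degree_lt_iff_coeff_zero]
    intro m hm
    rw [hrc]
    have hnm : n ≤ m := by exact_mod_cast hm
    have : ¬ m < n := by omega
    simp [this]
  rw [redCoeff, hmod, hrc, if_pos hi]

lemma polyOf_mul_coeff (n : ℕ) (d e : Fin n → ℝ) (m : ℕ) :
    (polyOf n d * polyOf n e).coeff m
      = ∑ j : Fin n, ∑ k : Fin n,
          if (j : ℕ) + (k : ℕ) = m then d j * e k else 0 := by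
  unfold polyOf
  rw [Finset.sum_mul_sum]
  rw [Polynomial.finset_sum_coeff]
  refine Finset.sum_congr rfl fun j _ => ?_
  rw [Polynomial.finset_sum_coeff]
  refine Finset.sum_congr rfl fun k _ => ?_
  rw [show Polynomial.C (d j) * Polynomial.X ^ (j : ℕ)
        * (Polynomial.C (e k) * Polynomial.X ^ (k : ℕ))
      = Polynomial.C (d j * e k) * Polynomial.X ^ ((j : ℕ) + (k : ℕ)) by
    rw [Polynomial.C_mul, pow_add]; ring]
  rw [Polynomial.coeff_C_mul, Polynomial.coeff_X_pow]
  by_cases h : (j : ℕ) + (k : ℕ) = m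
  · simp [h]
  · simp [h, Ne.symm h]

lemma fin_sub_coe {n : ℕ} (i j : Fin n) :
    ((i - j : Fin n) : ℕ) = if (j : ℕ) ≤ (i : ℕ) then (i : ℕ) - j else n + i - j := by
  have hn : 0 < n := i.pos
  rw [Fin.sub_def]
  simp only
  rcases le_or_gt (j : ℕ) (i : ℕ) with h | h
  · rw [if_pos h]
    have h1 : n - (j : ℕ) + i = n + ((i : ℕ) - j) := by omega
    rw [h1, Nat.add_mod_left, Nat.mod_eq_of_lt (by omega)]
  · rw [if_neg (by omega)]
    have h1 : n - (j : ℕ) + i = n + i - j := by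
      have := j.isLt; omega
    rw [h1, Nat.mod_eq_of_lt (by have := j.isLt; omega)]

lemma key_coeff (n : ℕ) (hn : 1 ≤ n) (a : ℝ) (v d0 d1 e : Fin n → ℝ) (i : Fin n) :
    redCoeff n (Polynomial.C a * polyOf n v + polyOf n d0 + polyOf n d1 * polyOf n e) i
      = a * v i + d0 i
        + ∑ j : Fin n, (if (j : ℕ) ≤ (i : ℕ) then (1 : ℝ) else -1) * (d1 j * e (i - j)) := by
  classical
  set p := Polynomial.C a * polyOf n v + polyOf n d0 + polyOf n d1 * polyOf n e with hp
  have hbound : ∀ m, 2 * n ≤ m → p.coeff m = 0 := by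
    intro m hm
    rw [hp]
    simp only [Polynomial.coeff_add, Polynomial.coeff_C_mul, polyOf_coeff, polyOf_mul_coeff]
    rw [dif_neg (by omega), dif_neg (by omega)]
    have hz : ∀ j : Fin n, (∑ k : Fin n,
        if (j : ℕ) + (k : ℕ) = m then d1 j * e k else 0) = 0 := by
      intro j
      apply Finset.sum_eq_zero
      intro k _
      have : ¬ ((j : ℕ) + (k : ℕ) = m) := by
        have := j.isLt; have := k.isLt; omega
      simp [this]
    rw [Finset.sum_congr rfl fun j _ => hz j]
    simp
  rw [redCoeff_of_bounded n (by omega) p hbound i i.isLt]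
  have hin : ¬ ((i : ℕ) < n → False) := by simp [i.isLt]
  have hcoeff_i : p.coeff i = a * v i + d0 i
      + ∑ j : Fin n, ∑ k : Fin n, if (j : ℕ) + (k : ℕ) = (i : ℕ) then d1 j * e k else 0 := by
    rw [hp]
    simp only [Polynomial.coeff_add, Polynomial.coeff_C_mul, polyOf_coeff, polyOf_mul_coeff]
    rw [dif_pos i.isLt, dif_pos i.isLt]
  have hcoeff_ni : p.coeff (n + i) =
      ∑ j : Fin n, ∑ k : Fin n, if (j : ℕ) + (k : ℕ) = n + (i : ℕ) then d1 j * e k else 0 := by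
    rw [hp]
    simp only [Polynomial.coeff_add, Polynomial.coeff_C_mul, polyOf_coeff, polyOf_mul_coeff]
    rw [dif_neg (by omega), dif_neg (by omega)]
    ring
  rw [hcoeff_i, hcoeff_ni, add_sub_assoc, ← Finset.sum_sub_distrib]
  have hterm : ∀ j : Fin n,
      ((∑ k : Fin n, if (j : ℕ) + (k : ℕ) = (i : ℕ) then d1 j * e k else 0)
        - ∑ k : Fin n, if (j : ℕ) + (k : ℕ) = n + (i : ℕ) then d1 j * e k else 0)
      = (if (j : ℕ) ≤ (i : ℕ) then (1 : ℝ) else -1) * (d1 j * e (i - j)) := by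
    intro j
    rcases le_or_gt (j : ℕ) (i : ℕ) with h | h
    · have hk : ((i : ℕ) - j) < n := by have := i.isLt; omega
      have hsub : (i - j : Fin n) = ⟨(i : ℕ) - j, hk⟩ := by
        apply Fin.ext
        rw [fin_sub_coe, if_pos h]
      have h1 : (∑ k : Fin n, if (j : ℕ) + (k : ℕ) = (i : ℕ) then d1 j * e k else 0)
          = d1 j * e (i - j) := by
        rw [Finset.sum_eq_single (⟨(i : ℕ) - j, hk⟩ : Fin n)]
        · rw [if_pos (by simp; omega), hsub]
        · intro b _ hb
          have : ¬ ((j : ℕ) + (b : ℕ) = (i : ℕ)) := by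
            intro he
            apply hb; apply Fin.ext; simp; omega
          simp [this]
        · simp
      have h2 : (∑ k : Fin n, if (j : ℕ) + (k : ℕ) = n + (i : ℕ) then d1 j * e k else 0) = 0 := by
        apply Finset.sum_eq_zero
        intro k _
        have : ¬ ((j : ℕ) + (k : ℕ) = n + (i : ℕ)) := by have := k.isLt; omega
        simp [this]
      rw [h1, h2, if_pos h]; ring
    · have hk : (n + (i : ℕ) - j) < n := by have := j.isLt; omega
      have hsub : (i - j : Fin n) = ⟨n + (i : ℕ) - j, hk⟩ := by
        apply Fin.ext
        rw [fin_sub_coe, if_neg (by omega)]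
      have h1 : (∑ k : Fin n, if (j : ℕ) + (k : ℕ) = (i : ℕ) then d1 j * e k else 0) = 0 := by
        apply Finset.sum_eq_zero
        intro k _
        have : ¬ ((j : ℕ) + (k : ℕ) = (i : ℕ)) := by omega
        simp [this]
      have h2 : (∑ k : Fin n, if (j : ℕ) + (k : ℕ) = n + (i : ℕ) then d1 j * e k else 0)
          = d1 j * e (i - j) := by
        rw [Finset.sum_eq_single (⟨n + (i : ℕ) - j, hk⟩ : Fin n)]
        · rw [if_pos (by simp; omega), hsub]
        · intro b _ hb
          have : ¬ ((j : ℕ) + (b : ℕ) = n + (i : ℕ)) := by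
            intro he
            apply hb; apply Fin.ext; simp; omega
          simp [this]
        · simp
      rw [h1, h2, if_neg (by omega)]; ring
  rw [Finset.sum_congr rfl fun j _ => hterm j]


lemma iIndepFun_sumElim {Ω : Type*} [MeasurableSpace Ω] {P : Measure Ω}
    {n m : ℕ} {X : Fin n → Ω → ℝ} {Y : Fin m → Ω → ℝ}
    (hXm : ∀ j, Measurable (X j)) (hYm : ∀ j, Measurable (Y j))
    (hX : iIndepFun X P)
    (hY : iIndepFun Y P)
    (hXY : IndepFun (fun ω j => X j ω) (fun ω j => Y j ω) P) :
    iIndepFun (Sum.elim X Y) P := by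
  classical
  rw [iIndepFun_iff_measure_inter_preimage_eq_mul]
  intro S sets hsets
  have hA : MeasurableSet (⋂ j ∈ S.toLeft, (fun v : Fin n → ℝ => v j) ⁻¹' sets (Sum.inl j)) :=
    MeasurableSet.biInter (S.toLeft : Finset (Fin n)).countable_toSet fun j hj =>
      (measurable_pi_apply j) (hsets (Sum.inl j) (Finset.mem_toLeft.1 hj))
  have hB : MeasurableSet (⋂ j ∈ S.toRight, (fun v : Fin m → ℝ => v j) ⁻¹' sets (Sum.inr j)) :=
    MeasurableSet.biInter (S.toRight : Finset (Fin m)).countable_toSet fun j hj =>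
      (measurable_pi_apply j) (hsets (Sum.inr j) (Finset.mem_toRight.1 hj))
  have hsplit : (⋂ x ∈ S, Sum.elim X Y x ⁻¹' sets x)
      = ((fun ω j => X j ω) ⁻¹'
          (⋂ j ∈ S.toLeft, (fun v : Fin n → ℝ => v j) ⁻¹' sets (Sum.inl j)))
        ∩ ((fun ω j => Y j ω) ⁻¹'
          (⋂ j ∈ S.toRight, (fun v : Fin m → ℝ => v j) ⁻¹' sets (Sum.inr j))) := by
    ext ω
    simp only [Set.mem_iInter, Set.mem_inter_iff, Set.mem_preimage, Finset.mem_toLeft,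
      Finset.mem_toRight]
    constructor
    · intro h
      exact ⟨fun j hj => h _ hj, fun j hj => h _ hj⟩
    · rintro ⟨h1, h2⟩ (x | x) hx
      exacts [h1 x hx, h2 x hx]
  rw [hsplit, hXY.measure_inter_preimage_eq_mul _ _ hA hB]
  have hXpre : ((fun ω j => X j ω) ⁻¹'
      (⋂ j ∈ S.toLeft, (fun v : Fin n → ℝ => v j) ⁻¹' sets (Sum.inl j)))
      = ⋂ j ∈ S.toLeft, X j ⁻¹' sets (Sum.inl j) := by
    simp only [Set.preimage_iInter]; rfl
  have hYpre : ((fun ω j => Y j ω) ⁻¹'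
      (⋂ j ∈ S.toRight, (fun v : Fin m → ℝ => v j) ⁻¹' sets (Sum.inr j)))
      = ⋂ j ∈ S.toRight, Y j ⁻¹' sets (Sum.inr j) := by
    simp only [Set.preimage_iInter]; rfl
  rw [hXpre, hYpre,
    hX.measure_inter_preimage_eq_mul S.toLeft (fun j hj => hsets (Sum.inl j) (Finset.mem_toLeft.1 hj)),
    hY.measure_inter_preimage_eq_mul S.toRight (fun j hj => hsets (Sum.inr j) (Finset.mem_toRight.1 hj))]
  have hprod : ∏ x ∈ S, P (Sum.elim X Y x ⁻¹' sets x)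
      = (∏ j ∈ S.toLeft, P (X j ⁻¹' sets (Sum.inl j)))
        * ∏ j ∈ S.toRight, P (Y j ⁻¹' sets (Sum.inr j)) := by
    conv_lhs => rw [show S = S.toLeft.disjSum S.toRight from (Finset.toLeft_disjSum_toRight).symm]
    rw [Finset.prod_disjSum]; rfl
  rw [hprod]

/-- **variance after modulus switching.** With `ν, d₀, d₁, s` mutually
independent random polynomials in `R_n` as described,
`Var(((q'/q)·ν + d₀ + d₁·s)|_i) = (q'²/q²)·Var(ν|_i) + (t²/12)·(1 + n·V_s)`. -/
theorem stmt13 {Ω : Type*} [MeasurableSpace Ω] (P : Measure Ω) [IsProbabilityMeasure P]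
    (n : ℕ) (hn : 1 ≤ n) (t q q' : ℝ) (ht : 0 < t) (hq' : 0 < q') (hqq : q' ≤ q)
    (Vs : ℝ) (hVs : 0 < Vs)
    (ν d₀ d₁ s : Fin n → Ω → ℝ)
    (hmeas : ∀ f ∈ [ν, d₀, d₁, s], ∀ j, Measurable (f j))
    -- `ν, d₀, d₁, s` are mutually independent
    (hindep : iIndepFun
      (![fun ω (j : Fin n) => ν j ω, fun ω j => d₀ j ω, fun ω j => d₁ j ω,
         fun ω j => s j ω] : Fin 4 → Ω → Fin n → ℝ) P)
    -- the coefficients of `ν` are square-integrable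
    (hνL2 : ∀ j, MemLp (ν j) 2 P)
    -- `d₀` and `d₁` have independent mean-zero coefficients of variance `t²/12`
    (hd₀indep : iIndepFun d₀ P)
    (hd₁indep : iIndepFun d₁ P)
    (hd₀mean : ∀ j, (∫ ω, d₀ j ω ∂P) = 0) (hd₁mean : ∀ j, (∫ ω, d₁ j ω ∂P) = 0)
    (hd₀L2 : ∀ j, MemLp (d₀ j) 2 P) (hd₁L2 : ∀ j, MemLp (d₁ j) 2 P)
    (hd₀var : ∀ j, variance (d₀ j) P = t ^ 2 / 12)
    (hd₁var : ∀ j, variance (d₁ j) P = t ^ 2 / 12)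
    -- `s` has i.i.d. mean-zero coefficients of variance `V_s`
    (hsindep : iIndepFun s P)
    (hsid : ∀ j j', Measure.map (s j) P = Measure.map (s j') P)
    (hsmean : ∀ j, (∫ ω, s j ω ∂P) = 0)
    (hsL2 : ∀ j, MemLp (s j) 2 P)
    (hsvar : ∀ j, variance (s j) P = Vs)
    (i : Fin n) :
    variance (fun ω => redCoeff n
        (Polynomial.C (q' / q) * polyOf n (fun j => ν j ω)
          + polyOf n (fun j => d₀ j ω)
          + polyOf n (fun j => d₁ j ω) * polyOf n (fun j => s j ω)) i) P
      = (q' ^ 2 / q ^ 2) * variance (fun ω => ν i ω) P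
        + (t ^ 2 / 12) * (1 + n * Vs) := by
  classical
  haveI : NeZero n := ⟨by omega⟩
  have hνm : ∀ j, Measurable (ν j) := hmeas ν (by simp)
  have hd₀m : ∀ j, Measurable (d₀ j) := hmeas d₀ (by simp)
  have hd₁m : ∀ j, Measurable (d₁ j) := hmeas d₁ (by simp)
  have hsm : ∀ j, Measurable (s j) := hmeas s (by simp)
  -- abbreviations
  set T : Fin n → Ω → ℝ := fun j ω =>
    (if (j : ℕ) ≤ (i : ℕ) then (1 : ℝ) else -1) * (d₁ j ω * s (i - j) ω) with hTdef
  set A : Ω → ℝ := fun ω => (q' / q) * ν i ω with hAdef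
  set Z : Ω → ℝ := fun ω => ∑ j : Fin n, T j ω with hZdef
  set W : Ω → ℝ := fun ω => d₀ i ω + Z ω with hWdef
  -- rewrite the random variable
  have hfun : (fun ω => redCoeff n
        (Polynomial.C (q' / q) * polyOf n (fun j => ν j ω)
          + polyOf n (fun j => d₀ j ω)
          + polyOf n (fun j => d₁ j ω) * polyOf n (fun j => s j ω)) i)
      = A + W := by
    funext ω
    show _ = A ω + (d₀ i ω + ∑ j : Fin n, T j ω)
    rw [key_coeff n hn]
    simp only [hAdef, hTdef]
    ring
  rw [hfun]
  -- measurability of the four blocks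
  have hFm : ∀ k : Fin 4, Measurable
      ((![fun ω (j : Fin n) => ν j ω, fun ω j => d₀ j ω, fun ω j => d₁ j ω,
         fun ω j => s j ω] : Fin 4 → Ω → Fin n → ℝ) k) := by
    intro k
    fin_cases k
    · exact measurable_pi_lambda _ fun j => hνm j
    · exact measurable_pi_lambda _ fun j => hd₀m j
    · exact measurable_pi_lambda _ fun j => hd₁m j
    · exact measurable_pi_lambda _ fun j => hsm j
  -- combined independence of the coefficients of d₁ and s
  have hblock : IndepFun (fun ω (j : Fin n) => d₁ j ω) (fun ω j => s j ω) P :=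
    hindep.indepFun (show (2 : Fin 4) ≠ 3 by decide)
  have hG : iIndepFun (Sum.elim d₁ s) P :=
    iIndepFun_sumElim hd₁m hsm hd₁indep hsindep hblock
  have hGm : ∀ x : Fin n ⊕ Fin n, Measurable (Sum.elim d₁ s x) := by
    rintro (x | x)
    exacts [hd₁m x, hsm x]
  have hds : ∀ j k, IndepFun (d₁ j) (s k) P := fun j k =>
    hG.indepFun (show (Sum.inl j : Fin n ⊕ Fin n) ≠ Sum.inr k by simp)
  -- moments of the products
  have hprodL2 : ∀ j k, MemLp (fun ω => d₁ j ω * s k ω) 2 P := by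
    intro j k
    have h1 : Integrable (fun ω => (d₁ j ω) ^ 2 * (s k ω) ^ 2) P :=
      ((hds j k).comp (measurable_id.pow_const 2)
        (measurable_id.pow_const 2)).integrable_mul
        (hd₁L2 j).integrable_sq (hsL2 k).integrable_sq
    rw [memLp_two_iff_integrable_sq (f := fun ω => d₁ j ω * s k ω) (((hd₁m j).mul (hsm k)).aestronglyMeasurable)]
    have h2 : (fun ω => (d₁ j ω * s k ω) ^ 2)
        = fun ω => (d₁ j ω) ^ 2 * (s k ω) ^ 2 := by
      funext ω; ring
    rw [h2]
    exact h1
  have hEd : ∀ j, (∫ ω, (d₁ j ω) ^ 2 ∂P) = t ^ 2 / 12 := by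
    intro j
    have h := variance_eq_sub (hd₁L2 j)
    rw [hd₁var j] at h
    simp only [Pi.pow_apply] at h
    rw [hd₁mean j] at h
    linarith
  have hEs : ∀ k, (∫ ω, (s k ω) ^ 2 ∂P) = Vs := by
    intro k
    have h := variance_eq_sub (hsL2 k)
    rw [hsvar k] at h
    simp only [Pi.pow_apply] at h
    rw [hsmean k] at h
    linarith
  have hvarprod : ∀ j k, variance (fun ω => d₁ j ω * s k ω) P = t ^ 2 / 12 * Vs := by
    intro j k
    rw [variance_eq_sub (hprodL2 j k)]
    have hEm : (∫ ω, d₁ j ω * s k ω ∂P) = 0 := by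
      have h := (hds j k).integral_mul_eq_mul_integral
        ((hd₁L2 j).integrable one_le_two).aestronglyMeasurable ((hsL2 k).integrable one_le_two).aestronglyMeasurable
      simp only [Pi.mul_apply] at h
      rw [hd₁mean j, zero_mul] at h
      exact h
    have hEsq : (∫ ω, (d₁ j ω * s k ω) ^ 2 ∂P) = t ^ 2 / 12 * Vs := by
      have h2 := ((hds j k).comp (measurable_id.pow_const 2)
        (measurable_id.pow_const 2)).integral_mul_eq_mul_integral
        (hd₁L2 j).integrable_sq.aestronglyMeasurable (hsL2 k).integrable_sq.aestronglyMeasurable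
      simp only [Pi.mul_apply, Function.comp_apply] at h2
      calc (∫ ω, (d₁ j ω * s k ω) ^ 2 ∂P)
          = ∫ ω, (d₁ j ω) ^ 2 * (s k ω) ^ 2 ∂P := by
            congr 1; funext ω; ring
        _ = (∫ ω, (d₁ j ω) ^ 2 ∂P) * ∫ ω, (s k ω) ^ 2 ∂P := h2
        _ = t ^ 2 / 12 * Vs := by rw [hEd, hEs]
    simp only [Pi.pow_apply]
    rw [hEsq, hEm]
    ring
  have hTL2 : ∀ j, MemLp (T j) 2 P := fun j => (hprodL2 j (i - j)).const_mul _
  have hTvar : ∀ j, variance (T j) P = t ^ 2 / 12 * Vs := by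
    intro j
    rw [hTdef]
    rw [variance_const_mul ((if (j : ℕ) ≤ (i : ℕ) then (1 : ℝ) else -1))
      (fun ω => d₁ j ω * s (i - j) ω)]
    rw [hvarprod j (i - j)]
    by_cases h : (j : ℕ) ≤ (i : ℕ) <;> simp [h]
  -- pairwise independence of the product terms
  have hTpair : Set.Pairwise ↑(Finset.univ : Finset (Fin n))
      fun j j' => IndepFun (T j) (T j') P := by
    intro j _ j' _ hjj'
    have h4 := hG.indepFun_prodMk_prodMk hGm
      (Sum.inl j) (Sum.inr (i - j)) (Sum.inl j') (Sum.inr (i - j'))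
      (by simp [hjj']) (by simp) (by simp)
      (by simp only [ne_eq, Sum.inr.injEq]; exact fun h => hjj' (sub_right_injective h))
    have h5 := h4.comp
      (φ := fun p : ℝ × ℝ => (if (j : ℕ) ≤ (i : ℕ) then (1 : ℝ) else -1) * (p.1 * p.2))
      (ψ := fun p : ℝ × ℝ => (if (j' : ℕ) ≤ (i : ℕ) then (1 : ℝ) else -1) * (p.1 * p.2))
      ((measurable_fst.mul measurable_snd).const_mul _)
      ((measurable_fst.mul measurable_snd).const_mul _)
    exact h5
  -- MemLp of the pieces
  have hAL2 : MemLp A 2 P := (hνL2 i).const_mul _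
  have hZsum : Z = ∑ j : Fin n, T j := by
    funext ω
    rw [hZdef]
    simp [Finset.sum_apply]
  have hZL2 : MemLp Z 2 P := by
    rw [hZsum]; exact memLp_finset_sum' _ fun j _ => hTL2 j
  have hWL2 : MemLp W 2 P := by
    have : W = (d₀ i) + Z := rfl
    rw [this]; exact (hd₀L2 i).add hZL2
  -- independence for the two splittings
  have hIndepAW : IndepFun A W P := by
    have h0 := hindep.indepFun_finset {0} {1, 2, 3} (by decide) hFm
    have he0 : Measurable (fun v : ({0} : Finset (Fin 4)) → Fin n → ℝ =>
        v ⟨0, by decide⟩ i) :=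
      Measurable.eval (measurable_pi_apply _)
    have hφ : Measurable (fun v : ({0} : Finset (Fin 4)) → Fin n → ℝ =>
        (q' / q) * v ⟨0, by decide⟩ i) := he0.const_mul _
    have hψ : Measurable (fun v : ({1, 2, 3} : Finset (Fin 4)) → Fin n → ℝ =>
        v ⟨1, by decide⟩ i + ∑ j : Fin n,
          (if (j : ℕ) ≤ (i : ℕ) then (1 : ℝ) else -1)
            * (v ⟨2, by decide⟩ j * v ⟨3, by decide⟩ (i - j))) := by
      have he1 : Measurable (fun v : ({1, 2, 3} : Finset (Fin 4)) → Fin n → ℝ =>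
          v ⟨1, by decide⟩ i) := Measurable.eval (measurable_pi_apply _)
      have he2 : ∀ j : Fin n, Measurable
          (fun v : ({1, 2, 3} : Finset (Fin 4)) → Fin n → ℝ => v ⟨2, by decide⟩ j) :=
        fun j => Measurable.eval (measurable_pi_apply _)
      have he3 : ∀ j : Fin n, Measurable
          (fun v : ({1, 2, 3} : Finset (Fin 4)) → Fin n → ℝ => v ⟨3, by decide⟩ j) :=
        fun j => Measurable.eval (measurable_pi_apply _)
      apply Measurable.add
      · exact he1
      · apply Finset.measurable_sum
        intro j _
        exact ((he2 j).mul (he3 (i - j))).const_mul _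
    exact h0.comp hφ hψ
  have hIndepDZ : IndepFun (d₀ i) Z P := by
    have h0 := hindep.indepFun_finset {1} {2, 3} (by decide) hFm
    have hφ : Measurable (fun v : ({1} : Finset (Fin 4)) → Fin n → ℝ =>
        v ⟨1, by decide⟩ i) :=
      Measurable.eval (measurable_pi_apply _)
    have hψ : Measurable (fun v : ({2, 3} : Finset (Fin 4)) → Fin n → ℝ =>
        ∑ j : Fin n,
          (if (j : ℕ) ≤ (i : ℕ) then (1 : ℝ) else -1)
            * (v ⟨2, by decide⟩ j * v ⟨3, by decide⟩ (i - j))) := by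
      have he2 : ∀ j : Fin n, Measurable
          (fun v : ({2, 3} : Finset (Fin 4)) → Fin n → ℝ => v ⟨2, by decide⟩ j) :=
        fun j => Measurable.eval (measurable_pi_apply _)
      have he3 : ∀ j : Fin n, Measurable
          (fun v : ({2, 3} : Finset (Fin 4)) → Fin n → ℝ => v ⟨3, by decide⟩ j) :=
        fun j => Measurable.eval (measurable_pi_apply _)
      apply Finset.measurable_sum
      intro j _
      exact ((he2 j).mul (he3 (i - j))).const_mul _
    exact h0.comp hφ hψ
  -- final assembly
  rw [hIndepAW.variance_add hAL2 hWL2]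
  have hvarA : variance A P = q' ^ 2 / q ^ 2 * variance (ν i) P := by
    rw [hAdef, variance_const_mul, div_pow]
  have hvarW : variance W P = t ^ 2 / 12 + n * (t ^ 2 / 12 * Vs) := by
    have hWadd : W = (d₀ i) + Z := rfl
    rw [hWadd, hIndepDZ.variance_add (hd₀L2 i) hZL2, hd₀var i]
    have hvarZ : variance Z P = n * (t ^ 2 / 12 * Vs) := by
      rw [hZsum, IndepFun.variance_sum (fun j _ => hTL2 j) hTpair]
      rw [Finset.sum_congr rfl fun j _ => hTvar j]
      simp [Finset.sum_const, Finset.card_univ, nsmul_eq_mul]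
    rw [hvarZ]
  rw [hvarA, hvarW]
  ring
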